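/- The natural density of pairs of coprime integers is 6/π²: if Pₙ denotes the proportion of pairs (x, y) ∈ {1,…,n}² with gcd(x, y) = 1, i.e., Pₙ = #{(x,y) ∈ {1,…,n}² : gcd(x,y) = 1} / n², then Pₙ → 6/π² as n → ∞. -/

import Mathlib

open Filter Topology Real Finset ArithmeticFunction
open scoped ArithmeticFunction.Moebius

private lemma sum_mu_divisors (m : ℕ) :
    ∑ d ∈ m.divisors, (μ d : ℤ) = if m = 1 then 1 else 0 := by
  rw [← coe_mul_zeta_apply, moebius_mul_coe_zeta, one_apply]

private lemma key_count (n : ℕ) :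
    ((((Finset.Icc 1 n) ×ˢ (Finset.Icc 1 n)).filter
        fun p => Nat.gcd p.1 p.2 = 1).card : ℤ)
      = ∑ d ∈ Finset.Icc 1 n, (μ d : ℤ) * ((n / d : ℕ) : ℤ) ^ 2 := by
  classical
  set S := (Finset.Icc 1 n) ×ˢ (Finset.Icc 1 n) with hS
  have step1 : ((S.filter fun p => Nat.gcd p.1 p.2 = 1).card : ℤ)
      = ∑ p ∈ S, ∑ d ∈ Finset.Icc 1 n,
          if d ∣ p.1 ∧ d ∣ p.2 then (μ d : ℤ) else 0 := by
    rw [← Finset.sum_boole]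
    refine Finset.sum_congr rfl fun p hp => ?_
    obtain ⟨hp1, hp2⟩ := Finset.mem_product.mp hp
    rw [Finset.mem_Icc] at hp1 hp2
    have h1 : p.1 ≠ 0 := by omega
    have hfil : (Finset.Icc 1 n).filter (fun d => d ∣ p.1 ∧ d ∣ p.2)
        = (Nat.gcd p.1 p.2).divisors := by
      ext d
      simp only [Finset.mem_filter, Finset.mem_Icc, Nat.mem_divisors]
      constructor
      · rintro ⟨⟨hd1, hdn⟩, hdp1, hdp2⟩
        exact ⟨Nat.dvd_gcd hdp1 hdp2, fun h => h1 (Nat.eq_zero_of_gcd_eq_zero_left h)⟩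
      · rintro ⟨hd, -⟩
        have hdp1 := hd.trans (Nat.gcd_dvd_left _ _)
        have hdp2 := hd.trans (Nat.gcd_dvd_right _ _)
        have hdle := Nat.le_of_dvd (by omega) hdp1
        have hdpos : 1 ≤ d := Nat.one_le_iff_ne_zero.mpr fun h => by
          subst h; exact h1 (Nat.eq_zero_of_zero_dvd hdp1)
        exact ⟨⟨hdpos, by omega⟩, hdp1, hdp2⟩
    rw [← Finset.sum_filter, hfil, sum_mu_divisors]
  rw [step1, Finset.sum_comm]
  refine Finset.sum_congr rfl fun d hd => ?_
  rw [Finset.mem_Icc] at hd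
  have hcard : (S.filter fun p => d ∣ p.1 ∧ d ∣ p.2).card = (n / d) ^ 2 := by
    rw [hS, Finset.filter_product, Finset.card_product]
    have : ((Finset.Icc 1 n).filter fun x => d ∣ x).card = n / d := by
      have h0 : Finset.Icc 1 n = Finset.Ioc 0 n := rfl
      rw [h0]
      simpa using Nat.Ioc_filter_dvd_card_eq_div n d
    rw [this, sq]
  calc ∑ p ∈ S, (if d ∣ p.1 ∧ d ∣ p.2 then (μ d : ℤ) else 0)
      = ∑ p ∈ S.filter fun p => d ∣ p.1 ∧ d ∣ p.2, (μ d : ℤ) := by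
        rw [Finset.sum_filter]
    _ = (μ d : ℤ) * ((n / d : ℕ) : ℤ) ^ 2 := by
        rw [Finset.sum_const, hcard, nsmul_eq_mul, Nat.cast_pow, mul_comm]

noncomputable def Fd (n d : ℕ) : ℝ :=
  if d ∈ Finset.Icc 1 n then (μ d : ℝ) * ((n / d : ℕ) : ℝ) ^ 2 / (n : ℝ) ^ 2 else 0

noncomputable def Gd (d : ℕ) : ℝ := (μ d : ℝ) / (d : ℝ) ^ 2

lemma Fd_bound (n d : ℕ) : |Fd n d| ≤ 1 / (d : ℝ) ^ 2 := by
  unfold Fd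
  split_ifs with h
  · rw [Finset.mem_Icc] at h
    have hd : (0:ℝ) < (d:ℝ) := by exact_mod_cast h.1
    have hn : (0:ℝ) < (n:ℝ) := by exact_mod_cast (by omega : 0 < n)
    have hmu : |(μ d : ℝ)| ≤ 1 := by
      have := abs_moebius_le_one (n := d)
      exact_mod_cast this
    have hkey : ((n / d : ℕ) : ℝ) ^ 2 / (n : ℝ) ^ 2 ≤ 1 / (d : ℝ) ^ 2 := by
      rw [div_le_div_iff₀ (by positivity) (by positivity)]
      have h1 : ((n / d : ℕ) : ℝ) * (d : ℝ) ≤ (n : ℝ) := by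
        exact_mod_cast Nat.cast_le.mpr (Nat.div_mul_le_self n d)
      have h2 : (0:ℝ) ≤ ((n / d : ℕ) : ℝ) := by positivity
      calc ((n / d : ℕ) : ℝ) ^ 2 * (d : ℝ) ^ 2 = (((n / d : ℕ) : ℝ) * d) ^ 2 := by ring
        _ ≤ (n : ℝ) ^ 2 := by
            apply pow_le_pow_left₀ (by positivity) h1
        _ = 1 * (n:ℝ)^2 := (one_mul _).symm
    calc |(μ d : ℝ) * ((n / d : ℕ) : ℝ) ^ 2 / (n : ℝ) ^ 2|
        = |(μ d : ℝ)| * (((n / d : ℕ) : ℝ) ^ 2 / (n : ℝ) ^ 2) := by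
          rw [abs_div, abs_mul, abs_of_nonneg (by positivity : (0:ℝ) ≤ ((n / d : ℕ) : ℝ)^2),
            abs_of_nonneg (by positivity : (0:ℝ) ≤ (n:ℝ)^2), mul_div_assoc]
      _ ≤ 1 * (1 / (d : ℝ) ^ 2) := by
          apply mul_le_mul hmu hkey (by positivity) zero_le_one
      _ = 1 / (d : ℝ) ^ 2 := one_mul _
  · simp only [abs_zero]; positivity

lemma Fd_tendsto (d : ℕ) : Tendsto (fun n => Fd n d) atTop (𝓝 (Gd d)) := by
  rcases Nat.eq_zero_or_pos d with rfl | hd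
  · have h0 : ∀ n, Fd n 0 = 0 := fun n => by simp [Fd]
    have hG : Gd 0 = 0 := by simp [Gd, ArithmeticFunction.map_zero]
    simp only [h0, hG]
    exact tendsto_const_nhds
  have hd0 : (d:ℝ) ≠ 0 := by positivity
  have hratio : Tendsto (fun n : ℕ => ((n / d : ℕ) : ℝ) / (n : ℝ)) atTop (𝓝 (1 / d)) := by
    have hmod : Tendsto (fun n : ℕ => ((n % d : ℕ) : ℝ) / (n : ℝ)) atTop (𝓝 0) := by
      apply squeeze_zero (fun n => by positivity)
        (fun n => ?_) (tendsto_const_div_atTop_nhds_zero_nat (d:ℝ))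
      rcases Nat.eq_zero_or_pos n with rfl | hn
      · simp
      · have h1 : ((n % d : ℕ):ℝ) ≤ (d:ℝ) := by exact_mod_cast (Nat.mod_lt n hd).le
        have h2 : (0:ℝ) < (n:ℝ) := by exact_mod_cast hn
        gcongr
    have : Tendsto (fun n : ℕ => (1 - ((n % d : ℕ) : ℝ) / (n : ℝ)) / d) atTop (𝓝 ((1 - 0)/d)) :=
      (tendsto_const_nhds.sub hmod).div_const d
    rw [sub_zero] at this
    apply this.congr'
    filter_upwards [eventually_ge_atTop 1] with n hn
    have hn0 : (n:ℝ) ≠ 0 := by positivity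
    have hmd : ((n % d : ℕ) : ℝ) + (d:ℝ) * ((n / d : ℕ) : ℝ) = (n:ℝ) := by
      exact_mod_cast congrArg (Nat.cast : ℕ → ℝ) (Nat.mod_add_div n d)
    have hdiv : ((n / d : ℕ) : ℝ) = ((n:ℝ) - ((n % d : ℕ) : ℝ)) / d := by
      field_simp
      linarith [hmd]
    rw [hdiv]
    field_simp
  have hmain : Tendsto (fun n : ℕ => (μ d : ℝ) * (((n / d : ℕ) : ℝ) / (n : ℝ)) ^ 2)
      atTop (𝓝 ((μ d : ℝ) * (1 / d) ^ 2)) := (hratio.pow 2).const_mul _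
  have heq : (μ d : ℝ) * (1 / (d:ℝ)) ^ 2 = Gd d := by
    unfold Gd; field_simp
  rw [heq] at hmain
  apply hmain.congr'
  filter_upwards [eventually_ge_atTop d] with n hn
  have hnd : d ∈ Finset.Icc 1 n := Finset.mem_Icc.mpr ⟨hd, hn⟩
  have hn0 : (n:ℝ) ≠ 0 := by
    have : 1 ≤ n := le_trans hd hn
    positivity
  simp only [Fd, hnd, if_true, div_pow]
  ring

lemma summable_inv_sq : Summable (fun d : ℕ => 1 / (d : ℝ) ^ 2) :=
  Real.summable_one_div_nat_pow.mpr one_lt_two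

lemma Gd_tsum : ∑' d : ℕ, Gd d = 6 / π ^ 2 := by
  have hs : (1:ℝ) < (2:ℂ).re := by norm_num
  have hmul := LSeries_zeta_mul_Lseries_moebius (s := 2) hs
  rw [LSeries_zeta_eq_riemannZeta hs, riemannZeta_two] at hmul
  have hpi2 : ((π:ℂ)) ≠ 0 := by exact_mod_cast Real.pi_ne_zero
  have hL : LSeries (fun n => ((μ n : ℤ) : ℂ)) 2 = 6 / (π:ℂ) ^ 2 := by
    rw [eq_div_iff (pow_ne_zero 2 hpi2)]
    field_simp at hmul
    linear_combination hmul
  have hterm : ∀ d : ℕ, ((Gd d : ℝ) : ℂ) = LSeries.term (fun n => ((μ n : ℤ) : ℂ)) 2 d := by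
    intro d
    rcases Nat.eq_zero_or_pos d with rfl | hd
    · simp [Gd, LSeries.term_zero]
    · rw [LSeries.term_of_ne_zero (by omega)]
      have : (d:ℂ) ^ (2:ℂ) = (d:ℂ) ^ (2:ℕ) := by
        rw [show (2:ℂ) = ((2:ℕ):ℂ) by norm_num, Complex.cpow_natCast]
      rw [this]
      unfold Gd
      push_cast
      rfl
  have : ((∑' d : ℕ, Gd d : ℝ) : ℂ) = 6 / (π:ℂ) ^ 2 := by
    rw [Complex.ofReal_tsum]
    rw [tsum_congr hterm]
    exact hL
  have h2 := this
  rw [show (6 / (π:ℂ)^2) = ((6 / π^2 : ℝ) : ℂ) by push_cast; ring] at h2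
  exact_mod_cast h2

/-- The natural density of pairs of coprime integers is `6 / π²`: the proportion of pairs
`(x, y) ∈ {1, …, n}²` with `gcd (x, y) = 1` tends to `6 / π²`. -/
theorem coprime_pairs_density :
    Tendsto (fun n : ℕ =>
        ((((Finset.Icc 1 n) ×ˢ (Finset.Icc 1 n)).filter
            fun p => Nat.gcd p.1 p.2 = 1).card : ℝ) / (n : ℝ) ^ 2)
      atTop (𝓝 (6 / π ^ 2)) := by
  have hdc : Tendsto (fun n => ∑' d, Fd n d) atTop (𝓝 (∑' d, Gd d)) :=
    tendsto_tsum_of_dominated_convergence summable_inv_sq Fd_tendsto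
      (Filter.Eventually.of_forall (fun n d => Fd_bound n d))
  rw [Gd_tsum] at hdc
  apply hdc.congr'
  filter_upwards [eventually_ge_atTop 1] with n hn
  have hsum : ∑' d, Fd n d
      = ∑ d ∈ Finset.Icc 1 n, (μ d : ℝ) * ((n / d : ℕ) : ℝ) ^ 2 / (n : ℝ) ^ 2 := by
    rw [tsum_eq_sum (s := Finset.Icc 1 n) (fun d hd => by simp [Fd, hd])]
    exact Finset.sum_congr rfl fun d hd => by simp [Fd, hd]
  rw [hsum, ← Finset.sum_div]
  congr 1
  have hk := congrArg (fun z : ℤ => (z : ℝ)) (key_count n)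
  push_cast at hk
  exact hk.symm
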